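/- If (a_n)_{n≥0} is a sequence in a monoid such that a_{n+1}^2 = a_n for all n ≥ 0, then the assignment q(t) = a_0^{t_0} · a_{m_1} · ... · a_{m_j}, where t = t_0 + 2^{-m_1} + ... + 2^{-m_j} is the binary expansion of a positive dyadic rational t (with integers t_0 ≥ 0 and 1 ≤ m_1 < ... < m_j), defines a semigroup homomorphism from the additive semigroup of positive dyadic rationals: q(s+t) = q(s)·q(t) for all positive dyadic rationals s, t. -/

import Mathlib

/-- A positive dyadic rational: a rational of the form `k / 2^m` with `k, m` positive
(equivalently `k` positive, `m` a natural number). -/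
def IsPosDyadic (t : ℚ) : Prop := ∃ k m : ℕ, 0 < k ∧ t = (k : ℚ) / 2 ^ m

private lemma aux_pow {M : Type*} [Monoid M] (a : ℕ → M)
    (ha : ∀ n : ℕ, (a (n + 1)) ^ 2 = a n) (m d : ℕ) : a (m + d) ^ 2 ^ d = a m := by
  induction d with
  | zero => simp
  | succ d ih =>
    have : a (m + (d + 1)) ^ 2 ^ (d + 1) = (a (m + d + 1) ^ 2) ^ 2 ^ d := by
      rw [← pow_mul, pow_succ, mul_comm, ← Nat.add_assoc]
    rw [this, ha (m + d), ih]

private lemma aux_le {M : Type*} [Monoid M] (a : ℕ → M)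
    (ha : ∀ n : ℕ, (a (n + 1)) ^ 2 = a n) {k k' m m' : ℕ} (hmm : m ≤ m')
    (h : (k : ℚ) / 2 ^ m = (k' : ℚ) / 2 ^ m') : a m ^ k = a m' ^ k' := by
  obtain ⟨d, rfl⟩ := Nat.exists_eq_add_of_le hmm
  have hq : (k : ℚ) * 2 ^ (m + d) = (k' : ℚ) * 2 ^ m := by
    rw [div_eq_div_iff (by positivity) (by positivity)] at h
    exact h
  have hn : k * 2 ^ (m + d) = k' * 2 ^ m := by exact_mod_cast hq
  have hk' : k' = k * 2 ^ d := by
    have h2m : 0 < 2 ^ m := Nat.pow_pos (by norm_num)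
    have : k * (2 ^ m * 2 ^ d) = k' * 2 ^ m := by rw [← pow_add]; exact hn
    nlinarith [this]
  subst hk'
  rw [mul_comm, pow_mul, aux_pow a ha]

private lemma aux_wd {M : Type*} [Monoid M] (a : ℕ → M)
    (ha : ∀ n : ℕ, (a (n + 1)) ^ 2 = a n) {k k' m m' : ℕ}
    (h : (k : ℚ) / 2 ^ m = (k' : ℚ) / 2 ^ m') : a m ^ k = a m' ^ k' := by
  rcases le_total m m' with hmm | hmm
  · exact aux_le a ha hmm h
  · exact (aux_le a ha hmm h.symm).symm

private lemma aux_key {M : Type*} [Monoid M] (a : ℕ → M)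
    (ha : ∀ n : ℕ, (a (n + 1)) ^ 2 = a n) (k m : ℕ) (hk : 0 < k) :
    a (Nat.log 2 (((k : ℚ) / 2 ^ m)).den) ^ (((k : ℚ) / 2 ^ m)).num.toNat = a m ^ k := by
  set t : ℚ := (k : ℚ) / 2 ^ m with ht
  have htpos : 0 < t := by positivity
  have hnum : 0 < t.num := Rat.num_pos.mpr htpos
  have hdiv : t = Rat.divInt (k : ℤ) ((2 : ℤ) ^ m) := by
    rw [Rat.divInt_eq_div]; push_cast; rfl
  have hden : (t.den : ℤ) ∣ (2 : ℤ) ^ m := by rw [hdiv]; exact Rat.den_dvd _ _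
  have hdenN : t.den ∣ 2 ^ m := by exact_mod_cast hden
  obtain ⟨j, hj, hjeq⟩ := (Nat.dvd_prime_pow Nat.prime_two).mp hdenN
  have hlog : Nat.log 2 t.den = j := by rw [hjeq, Nat.log_pow (by norm_num)]
  have hteq : ((t.num.toNat : ℚ)) / 2 ^ j = (k : ℚ) / 2 ^ m := by
    have h1 : (t.num.toNat : ℚ) = (t.num : ℚ) := by
      exact_mod_cast Int.toNat_of_nonneg hnum.le
    have h2 : ((2 : ℚ) ^ j) = (t.den : ℚ) := by rw [hjeq]; push_cast; ring
    rw [h1, h2, Rat.num_div_den]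
  rw [hlog]
  exact aux_wd a ha hteq

private lemma aux_shift (k m N : ℕ) (h : m ≤ N) :
    (k : ℚ) / 2 ^ m = ((k * 2 ^ (N - m) : ℕ) : ℚ) / 2 ^ N := by
  push_cast
  rw [div_eq_div_iff (by positivity) (by positivity), mul_assoc, ← pow_add,
    Nat.sub_add_cancel h]

theorem stmt0 {M : Type*} [Monoid M] (a : ℕ → M) (ha : ∀ n : ℕ, (a (n + 1)) ^ 2 = a n) :
    ∃ q : ℚ → M,
      (∀ k m : ℕ, 0 < k → q ((k : ℚ) / 2 ^ m) = (a m) ^ k) ∧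
      (∀ s t : ℚ, IsPosDyadic s → IsPosDyadic t → q (s + t) = q s * q t) := by
  refine ⟨fun t => a (Nat.log 2 t.den) ^ t.num.toNat, fun k m hk => aux_key a ha k m hk, ?_⟩
  rintro s t ⟨k, m, hk, rfl⟩ ⟨k', m', hk', rfl⟩
  set N := max m m' with hN
  have hsum : (k : ℚ) / 2 ^ m + (k' : ℚ) / 2 ^ m'
      = ((k * 2 ^ (N - m) + k' * 2 ^ (N - m') : ℕ) : ℚ) / 2 ^ N := by
    rw [aux_shift k m N (le_max_left m m'), aux_shift k' m' N (le_max_right m m'),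
      ← add_div]
    push_cast
    ring
  have hkpos : 0 < k * 2 ^ (N - m) + k' * 2 ^ (N - m') :=
    Nat.add_pos_left (Nat.mul_pos hk (Nat.pow_pos (by norm_num))) _
  show a (Nat.log 2 (((k : ℚ) / 2 ^ m + (k' : ℚ) / 2 ^ m')).den)
      ^ (((k : ℚ) / 2 ^ m + (k' : ℚ) / 2 ^ m')).num.toNat
      = a (Nat.log 2 (((k : ℚ) / 2 ^ m)).den) ^ (((k : ℚ) / 2 ^ m)).num.toNat
        * a (Nat.log 2 (((k' : ℚ) / 2 ^ m')).den) ^ (((k' : ℚ) / 2 ^ m')).num.toNat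
  rw [hsum, aux_key a ha _ _ hkpos, aux_key a ha k m hk, aux_key a ha k' m' hk']
  have h1 : a N ^ 2 ^ (N - m) = a m := by
    have := aux_pow a ha m (N - m)
    rwa [Nat.add_sub_cancel' (le_max_left m m')] at this
  have h2 : a N ^ 2 ^ (N - m') = a m' := by
    have := aux_pow a ha m' (N - m')
    rwa [Nat.add_sub_cancel' (le_max_right m m')] at this
  rw [pow_add, mul_comm k, mul_comm k', pow_mul, pow_mul, h1, h2]
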